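/- The robustness of entanglement is a convex function: for density matrices σ₁, σ₂ on C^m ⊗ C^m and λ ∈ [0,1], R(λσ₁ + (1−λ)σ₂) ≤ λR(σ₁) + (1−λ)R(σ₂). -/

import Mathlib

open scoped BigOperators Matrix ComplexOrder

noncomputable section

/-- The pure product state |a⟩⟨a| ⊗ |b⟩⟨b| as a matrix on the bipartite index type. -/
def prodState {α β : Type*} [Fintype α] [Fintype β] (a : α → ℂ) (b : β → ℂ) :
    Matrix (α × β) (α × β) ℂ :=
  fun x y => (a x.1 * star (a y.1)) * (b x.2 * star (b y.2))

/-- A bipartite matrix is separable if it is a convex combination of pure product states. -/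
def SepState {α β : Type*} [Fintype α] [Fintype β]
    (σ : Matrix (α × β) (α × β) ℂ) : Prop :=
  ∃ (k : ℕ) (p : Fin k → ℝ) (a : Fin k → α → ℂ) (b : Fin k → β → ℂ),
    (∀ i, 0 ≤ p i) ∧ (∑ i, p i = 1) ∧
    (∀ i, ∑ x, ‖a i x‖ ^ 2 = 1) ∧ (∀ i, ∑ x, ‖b i x‖ ^ 2 = 1) ∧
    σ = ∑ i, ((p i : ℂ)) • prodState (a i) (b i)

/-- A density matrix: positive semidefinite with unit trace. -/
def IsDensity {n : Type*} [Fintype n] [DecidableEq n] (σ : Matrix n n ℂ) : Prop :=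
  σ.PosSemidef ∧ σ.trace = 1

/-- The robustness of entanglement: the least s ≥ 0 such that mixing σ with some
separable state π with weights 1/(1+s), s/(1+s) yields a separable state. -/
def robustness {α β : Type*} [Fintype α] [Fintype β] [DecidableEq α] [DecidableEq β]
    (σ : Matrix (α × β) (α × β) ℂ) : ℝ :=
  sInf { s : ℝ | 0 ≤ s ∧ ∃ π : Matrix (α × β) (α × β) ℂ, SepState π ∧
    SepState ((((1 + s)⁻¹ : ℝ) : ℂ) • σ + (((s / (1 + s)) : ℝ) : ℂ) • π) }

namespace RobustAux

variable {m : ℕ}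

def outer (u : Fin m → ℂ) : Matrix (Fin m) (Fin m) ℂ :=
  Matrix.of fun x y => u x * star (u y)

def kron (A B : Matrix (Fin m) (Fin m) ℂ) :
    Matrix (Fin m × Fin m) (Fin m × Fin m) ℂ :=
  Matrix.of fun p q => A p.1 q.1 * B p.2 q.2

lemma prodState_eq_kron (a b : Fin m → ℂ) :
    prodState a b = kron (outer a) (outer b) := rfl

def T0 (m : ℕ) : Set (Matrix (Fin m × Fin m) (Fin m × Fin m) ℂ) :=
  {P | ∃ a b : Fin m → ℂ, P = prodState a b}

def T1 (m : ℕ) : Set (Matrix (Fin m × Fin m) (Fin m × Fin m) ℂ) :=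
  {P | ∃ a b : Fin m → ℂ, (∑ x, ‖a x‖ ^ 2 = 1) ∧ (∑ x, ‖b x‖ ^ 2 = 1) ∧
    P = prodState a b}

lemma kron_add_left (A A' B : Matrix (Fin m) (Fin m) ℂ) :
    kron (A + A') B = kron A B + kron A' B := by
  ext p q; simp [kron, add_mul]

lemma kron_add_right (A B B' : Matrix (Fin m) (Fin m) ℂ) :
    kron A (B + B') = kron A B + kron A B' := by
  ext p q; simp [kron, mul_add]

lemma kron_smul_left (c : ℂ) (A B : Matrix (Fin m) (Fin m) ℂ) :
    kron (c • A) B = c • kron A B := by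
  ext p q; simp [kron, mul_assoc]

lemma kron_smul_right (c : ℂ) (A B : Matrix (Fin m) (Fin m) ℂ) :
    kron A (c • B) = c • kron A B := by
  ext p q; simp [kron]; ring

lemma kron_zero_left (B : Matrix (Fin m) (Fin m) ℂ) : kron 0 B = 0 := by
  ext p q; simp [kron]

lemma kron_zero_right (A : Matrix (Fin m) (Fin m) ℂ) : kron A 0 = 0 := by
  ext p q; simp [kron]

lemma kron_mem_span {A B : Matrix (Fin m) (Fin m) ℂ}
    (hA : A ∈ Submodule.span ℂ (Set.range (outer (m := m))))
    (hB : B ∈ Submodule.span ℂ (Set.range (outer (m := m)))) :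
    kron A B ∈ Submodule.span ℂ (T0 m) := by
  induction hA using Submodule.span_induction with
  | mem A hA =>
    obtain ⟨a, rfl⟩ := hA
    induction hB using Submodule.span_induction with
    | mem B hB =>
      obtain ⟨b, rfl⟩ := hB
      exact Submodule.subset_span ⟨a, b, rfl⟩
    | zero => rw [kron_zero_right]; exact Submodule.zero_mem _
    | add B B' _ _ ihB ihB' =>
      rw [kron_add_right]; exact Submodule.add_mem _ ihB ihB'
    | smul c B _ ihB => rw [kron_smul_right]; exact Submodule.smul_mem _ _ ihB
  | zero => rw [kron_zero_left]; exact Submodule.zero_mem _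
  | add A A' _ _ ihA ihA' =>
    rw [kron_add_left]; exact Submodule.add_mem _ ihA ihA'
  | smul c A _ ihA => rw [kron_smul_left]; exact Submodule.smul_mem _ _ ihA

def evec (i : Fin m) : Fin m → ℂ := fun x => if x = i then 1 else 0

lemma outer_evec (i : Fin m) : outer (evec i) = Matrix.single i i 1 := by
  ext x y
  by_cases hx : x = i <;> by_cases hy : y = i <;>
    simp_all [outer, evec, Matrix.single, eq_comm]

lemma std_eq_combo {i k : Fin m} (h : i ≠ k) :
    Matrix.single i k (1 : ℂ) =
      (2⁻¹ : ℂ) • outer (fun x => evec i x + evec k x)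
      + (Complex.I / 2) • outer (fun x => evec i x + Complex.I * evec k x)
      - ((1 + Complex.I) / 2) • (outer (evec i) + outer (evec k)) := by
  ext x y
  by_cases hx : x = i <;> by_cases hy : y = i <;> by_cases hx' : x = k <;>
    by_cases hy' : y = k <;>
    simp_all [outer, evec, Matrix.single, Complex.ext_iff, eq_comm] <;> norm_num

lemma std_mem_span (i k : Fin m) :
    Matrix.single i k (1 : ℂ) ∈
      Submodule.span ℂ (Set.range (outer (m := m))) := by
  by_cases h : i = k
  · subst h; rw [← outer_evec]; exact Submodule.subset_span ⟨evec i, rfl⟩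
  · rw [std_eq_combo h]
    refine Submodule.sub_mem _ (Submodule.add_mem _ ?_ ?_) (Submodule.smul_mem _ _ (Submodule.add_mem _ ?_ ?_)) <;>
      first
      | exact Submodule.smul_mem _ _ (Submodule.subset_span ⟨_, rfl⟩)
      | exact Submodule.subset_span ⟨_, rfl⟩

lemma std_kron (i j k l : Fin m) :
    Matrix.single ((i, j)) ((k, l)) (1 : ℂ) =
      kron (Matrix.single i k 1) (Matrix.single j l 1) := by
  ext p q
  simp only [Matrix.single, kron, Matrix.of_apply, Prod.ext_iff]
  split_ifs <;> simp_all <;> tauto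

lemma mem_span_T0 (M : Matrix (Fin m × Fin m) (Fin m × Fin m) ℂ) :
    M ∈ Submodule.span ℂ (T0 m) := by
  rw [Matrix.matrix_eq_sum_single M]
  refine Submodule.sum_mem _ fun x _ => Submodule.sum_mem _ fun y _ => ?_
  have : Matrix.single x y (M x y) = M x y • Matrix.single x y 1 := by
    rw [Matrix.smul_single, smul_eq_mul, mul_one]
  rw [this]
  refine Submodule.smul_mem _ _ ?_
  obtain ⟨i, j⟩ := x
  obtain ⟨k, l⟩ := y
  rw [std_kron]
  exact kron_mem_span (std_mem_span _ _) (std_mem_span _ _)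

lemma prodState_smul (c d : ℂ) (a b : Fin m → ℂ) :
    prodState (c • a) (d • b) = ((c * star c) * (d * star d)) • prodState a b := by
  ext p q
  simp only [prodState, Pi.smul_apply, smul_eq_mul, Matrix.smul_apply, star_mul']
  ring

lemma exists_unit_scale (a : Fin m → ℂ) (ha : a ≠ 0) :
    ∃ (r : ℝ) (a' : Fin m → ℂ), 0 ≤ r ∧ (∑ x, ‖a' x‖ ^ 2 = 1) ∧ a = (r : ℂ) • a' := by
  have hex : ∃ x, a x ≠ 0 := by
    by_contra h
    push_neg at h
    exact ha (funext h)
  obtain ⟨x₀, hx₀⟩ := hex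
  have hSpos : 0 < ∑ x, ‖a x‖ ^ 2 := by
    refine Finset.sum_pos' (fun i _ => by positivity)
      ⟨x₀, Finset.mem_univ _, by have := norm_pos_iff.mpr hx₀; positivity⟩
  set r : ℝ := Real.sqrt (∑ x, ‖a x‖ ^ 2) with hr
  have hrpos : 0 < r := Real.sqrt_pos.2 hSpos
  have hrne : (r : ℂ) ≠ 0 := by exact_mod_cast hrpos.ne'
  have h2 : r ^ 2 = ∑ x, ‖a x‖ ^ 2 := Real.sq_sqrt hSpos.le
  have h3 : r ^ 2 ≠ 0 := pow_ne_zero 2 hrpos.ne'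
  refine ⟨r, fun x => (r : ℂ)⁻¹ * a x, hrpos.le, ?_, ?_⟩
  · have hterm : ∀ x, ‖(r : ℂ)⁻¹ * a x‖ ^ 2 = r⁻¹ ^ 2 * ‖a x‖ ^ 2 := by
      intro x
      rw [norm_mul, mul_pow, norm_inv, Complex.norm_real, Real.norm_eq_abs,
        abs_of_pos hrpos]
    simp only [hterm]
    rw [← Finset.mul_sum, inv_pow, inv_mul_eq_one₀ h3]
    exact h2
  · funext x
    simp only [Pi.smul_apply, smul_eq_mul, ← mul_assoc, mul_inv_cancel₀ hrne, one_mul]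

lemma T0_subset_span : T0 m ⊆ (Submodule.span ℂ (T1 m) : Set _) := by
  rintro P ⟨a, b, rfl⟩
  by_cases ha : a = 0
  · have : prodState a b = 0 := by ext p q; simp [prodState, ha]
    rw [this]; exact Submodule.zero_mem _
  by_cases hb : b = 0
  · have : prodState a b = 0 := by ext p q; simp [prodState, hb]
    rw [this]; exact Submodule.zero_mem _
  obtain ⟨r, a', hr0, ha', haeq⟩ := exists_unit_scale a ha
  obtain ⟨u, b', hu0, hb', hbeq⟩ := exists_unit_scale b hb
  rw [haeq, hbeq, prodState_smul]
  exact Submodule.smul_mem _ _ (Submodule.subset_span ⟨a', b', ha', hb', rfl⟩)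

lemma prodState_herm (a b : Fin m → ℂ) : (prodState a b)ᴴ = prodState a b := by
  ext p q
  simp only [Matrix.conjTranspose_apply, prodState, star_mul', star_star]
  ring

lemma trace_prodState (a b : Fin m → ℂ) (ha : ∑ x, ‖a x‖ ^ 2 = 1)
    (hb : ∑ x, ‖b x‖ ^ 2 = 1) : (prodState a b).trace = 1 := by
  have h1 : ∀ (c : Fin m → ℂ), ∑ x, c x * star (c x) = ((∑ x, ‖c x‖ ^ 2 : ℝ) : ℂ) := by
    intro c
    push_cast
    refine Finset.sum_congr rfl fun x _ => ?_
    rw [Complex.star_def, Complex.mul_conj]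
    norm_cast
    rw [Complex.normSq_eq_norm_sq]
  have : (prodState a b).trace
      = ∑ i : Fin m, ∑ j : Fin m, (a i * star (a i)) * (b j * star (b j)) := by
    rw [Matrix.trace, Fintype.sum_prod_type]
    rfl
  rw [this, ← Finset.sum_mul_sum, h1 a, h1 b, ha, hb]
  norm_num

lemma mem_span_T1 (M : Matrix (Fin m × Fin m) (Fin m × Fin m) ℂ) :
    M ∈ Submodule.span ℂ (T1 m) :=
  Submodule.span_le.2 T0_subset_span (mem_span_T0 M)

lemma exists_decomp (σ : Matrix (Fin m × Fin m) (Fin m × Fin m) ℂ)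
    (hherm : σᴴ = σ) :
    ∃ (k : ℕ) (c : Fin k → ℝ) (a b : Fin k → Fin m → ℂ),
      (∀ i, ∑ x, ‖a i x‖ ^ 2 = 1) ∧ (∀ i, ∑ x, ‖b i x‖ ^ 2 = 1) ∧
      σ = ∑ i, ((c i : ℂ)) • prodState (a i) (b i) := by
  have h1 : σ ∈ Submodule.span ℂ (T1 m) := mem_span_T1 σ
  rw [Submodule.mem_span_set'] at h1
  obtain ⟨k, f, g, hfg⟩ := h1
  choose a b ha hb hgP using fun i => (g i).2
  refine ⟨k, fun i => (f i).re, a, b, ha, hb, ?_⟩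
  have hP : ∀ i, ((g i : Matrix (Fin m × Fin m) (Fin m × Fin m) ℂ))ᴴ = g i := by
    intro i; rw [hgP]; exact prodState_herm _ _
  have h2 : σ = ∑ i, f i • (g i : Matrix (Fin m × Fin m) (Fin m × Fin m) ℂ) :=
    hfg.symm
  have h3 : σ = ∑ i, star (f i) • (g i : Matrix (Fin m × Fin m) (Fin m × Fin m) ℂ) := by
    conv_lhs => rw [← hherm, h2]
    rw [Matrix.conjTranspose_sum]
    exact Finset.sum_congr rfl fun i _ => by rw [Matrix.conjTranspose_smul, hP]
  have key : (2 : ℂ) • σ = ∑ i, ((2 : ℂ) * (((f i).re : ℝ) : ℂ)) •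
      (g i : Matrix (Fin m × Fin m) (Fin m × Fin m) ℂ) := by
    have h4 : σ + σ = ∑ i, (f i + star (f i)) •
        (g i : Matrix (Fin m × Fin m) (Fin m × Fin m) ℂ) := by
      calc σ + σ
          = (∑ i, f i • (g i : Matrix (Fin m × Fin m) (Fin m × Fin m) ℂ))
          + ∑ i, star (f i) • (g i : Matrix (Fin m × Fin m) (Fin m × Fin m) ℂ) := by
            rw [← h2, ← h3]
        _ = _ := by
            rw [← Finset.sum_add_distrib]
            exact Finset.sum_congr rfl fun i _ => (add_smul _ _ _).symm
    rw [two_smul, h4]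
    refine Finset.sum_congr rfl fun i _ => ?_
    congr 1
    rw [Complex.star_def, Complex.add_conj]
    push_cast
    ring
  have h6 : ∑ i, ((2 : ℂ) * (((f i).re : ℝ) : ℂ)) •
        (g i : Matrix (Fin m × Fin m) (Fin m × Fin m) ℂ)
      = (2 : ℂ) • ∑ i, (((f i).re : ℝ) : ℂ) •
        (g i : Matrix (Fin m × Fin m) (Fin m × Fin m) ℂ) := by
    rw [Finset.smul_sum]
    exact Finset.sum_congr rfl fun i _ => by rw [smul_smul]
  have h5 : σ = ∑ i, (((f i).re : ℝ) : ℂ) •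
      (g i : Matrix (Fin m × Fin m) (Fin m × Fin m) ℂ) := by
    have key' := key
    rw [h6] at key'
    exact smul_right_injective _ (two_ne_zero) key'
  rw [h5]
  exact Finset.sum_congr rfl fun i _ => by rw [hgP]

lemma sep_combo {ρ₁ ρ₂ : Matrix (Fin m × Fin m) (Fin m × Fin m) ℂ}
    (h1 : SepState ρ₁) (h2 : SepState ρ₂) {u v : ℝ} (hu : 0 ≤ u) (hv : 0 ≤ v)
    (huv : u + v = 1) : SepState (((u : ℝ) : ℂ) • ρ₁ + ((v : ℝ) : ℂ) • ρ₂) := by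
  obtain ⟨k₁, p₁, a₁, b₁, hp₁, hs₁, ha₁, hb₁, he₁⟩ := h1
  obtain ⟨k₂, p₂, a₂, b₂, hp₂, hs₂, ha₂, hb₂, he₂⟩ := h2
  refine ⟨k₁ + k₂, Fin.append (fun i => u * p₁ i) (fun i => v * p₂ i),
    Fin.append a₁ a₂, Fin.append b₁ b₂, ?_, ?_, ?_, ?_, ?_⟩
  · intro i
    refine Fin.addCases (fun j => ?_) (fun j => ?_) i <;>
      simp only [Fin.append_left, Fin.append_right] <;>
      exact mul_nonneg (by assumption) (by first | exact hp₁ _ | exact hp₂ _)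
  · rw [Fin.sum_univ_add]
    simp only [Fin.append_left, Fin.append_right]
    rw [← Finset.mul_sum, ← Finset.mul_sum, hs₁, hs₂, mul_one, mul_one, huv]
  · intro i
    refine Fin.addCases (motive := fun i => ∑ x, ‖Fin.append a₁ a₂ i x‖ ^ 2 = 1)
      (fun j => ?_) (fun j => ?_) i <;>
      simp only [Fin.append_left, Fin.append_right]
    · exact ha₁ _
    · exact ha₂ _
  · intro i
    refine Fin.addCases (motive := fun i => ∑ x, ‖Fin.append b₁ b₂ i x‖ ^ 2 = 1)
      (fun j => ?_) (fun j => ?_) i <;>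
      simp only [Fin.append_left, Fin.append_right]
    · exact hb₁ _
    · exact hb₂ _
  · rw [Fin.sum_univ_add]
    simp only [Fin.append_left, Fin.append_right]
    rw [he₁, he₂, Finset.smul_sum, Finset.smul_sum]
    congr 1 <;>
      refine Finset.sum_congr rfl fun i _ => ?_ <;>
      rw [smul_smul] <;> norm_cast
def Sset (σ : Matrix (Fin m × Fin m) (Fin m × Fin m) ℂ) : Set ℝ :=
  { s : ℝ | 0 ≤ s ∧ ∃ π : Matrix (Fin m × Fin m) (Fin m × Fin m) ℂ, SepState π ∧
    SepState ((((1 + s)⁻¹ : ℝ) : ℂ) • σ + (((s / (1 + s)) : ℝ) : ℂ) • π) }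

lemma nonempty_Sset (σ : Matrix (Fin m × Fin m) (Fin m × Fin m) ℂ)
    (hσ : IsDensity σ) : (Sset σ).Nonempty := by
  rcases Nat.eq_zero_or_pos m with hm | hm
  · exfalso
    subst hm
    have := hσ.2
    simp [Matrix.trace] at this
  obtain ⟨k, c, a, b, ha, hb, hdecomp⟩ := exists_decomp σ hσ.1.1
  have htr : ∑ i, c i = 1 := by
    have h0 : σ.trace = ((∑ i, c i : ℝ) : ℂ) := by
      rw [hdecomp, Matrix.trace_sum]
      push_cast
      exact Finset.sum_congr rfl fun i _ => by
        rw [Matrix.trace_smul, trace_prodState _ _ (ha i) (hb i), smul_eq_mul,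
          mul_one]
    have h1 : ((∑ i, c i : ℝ) : ℂ) = 1 := h0 ▸ hσ.2
    exact_mod_cast h1
  set cm : Fin k → ℝ := fun i => max (-(c i)) 0 with hcm
  set cp : Fin k → ℝ := fun i => max (c i) 0 with hcp
  have hcpm : ∀ i, c i + cm i = cp i := by
    intro i
    rcases le_total (c i) 0 with h | h
    · rw [hcm, hcp]
      simp only [max_eq_left (neg_nonneg.2 h), max_eq_right h]
      ring
    · rw [hcm, hcp]
      simp only [max_eq_right (neg_nonpos.2 h), max_eq_left h]
      ring
  have hcm0 : ∀ i, 0 ≤ cm i := fun i => le_max_right _ _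
  have hcp0 : ∀ i, 0 ≤ cp i := fun i => le_max_right _ _
  have hsum0 : 0 ≤ ∑ i, cm i := Finset.sum_nonneg fun i _ => hcm0 i
  set s : ℝ := (∑ i, cm i) + 1 with hs
  have hs0 : 0 < s := by linarith
  have hs0' : s ≠ 0 := ne_of_gt hs0
  have h1s : (0:ℝ) < 1 + s := by linarith
  have h1s' : (1:ℝ) + s ≠ 0 := ne_of_gt h1s
  have hcp_sum : ∑ i, cp i = s := by
    have h2 : ∑ i, (c i + cm i) = ∑ i, cp i :=
      Finset.sum_congr rfl fun i _ => hcpm i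
    rw [Finset.sum_add_distrib, htr] at h2
    rw [← h2, hs]
    ring
  set e0 : Fin m → ℂ := fun x => if x = ⟨0, hm⟩ then 1 else 0 with he0
  have he0n : ∑ x, ‖e0 x‖ ^ 2 = 1 := by
    rw [he0]
    simp [apply_ite (‖·‖), Finset.sum_ite_eq']
  -- the expansion helper
  have expand : ∀ (d : Fin k → ℝ) (dl : ℝ),
      (∑ i : Fin (k+1), (((Fin.snoc d dl : Fin (k+1) → ℝ) i : ℝ) : ℂ) •
        prodState ((Fin.snoc a e0 : Fin (k+1) → Fin m → ℂ) i) ((Fin.snoc b e0 : Fin (k+1) → Fin m → ℂ) i))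
      = (∑ i : Fin k, ((d i : ℝ) : ℂ) • prodState (a i) (b i))
        + ((dl : ℝ) : ℂ) • prodState e0 e0 := by
    intro d dl
    rw [Fin.sum_univ_castSucc]
    simp only [Fin.snoc_castSucc, Fin.snoc_last]
  -- properties shared by both SepState witnesses
  have hsnoc_a : ∀ i : Fin (k+1), ∑ x, ‖(Fin.snoc a e0 : Fin (k+1) → Fin m → ℂ) i x‖ ^ 2 = 1 := by
    intro i
    refine Fin.lastCases ?_ (fun j => ?_) i
    · simp only [Fin.snoc_last]; exact he0n
    · simp only [Fin.snoc_castSucc]; exact ha j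
  have hsnoc_b : ∀ i : Fin (k+1), ∑ x, ‖(Fin.snoc b e0 : Fin (k+1) → Fin m → ℂ) i x‖ ^ 2 = 1 := by
    intro i
    refine Fin.lastCases ?_ (fun j => ?_) i
    · simp only [Fin.snoc_last]; exact he0n
    · simp only [Fin.snoc_castSucc]; exact hb j
  refine ⟨s, le_of_lt hs0, ?_⟩
  refine ⟨∑ i : Fin (k+1), (((Fin.snoc (fun i => cm i / s) (1/s) : Fin (k+1) → ℝ) i : ℝ) : ℂ) •
    prodState ((Fin.snoc a e0 : Fin (k+1) → Fin m → ℂ) i) ((Fin.snoc b e0 : Fin (k+1) → Fin m → ℂ) i), ?_, ?_⟩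
  · refine ⟨k+1, (Fin.snoc (fun i => cm i / s) (1/s) : Fin (k+1) → ℝ), (Fin.snoc a e0 : Fin (k+1) → Fin m → ℂ),
      (Fin.snoc b e0 : Fin (k+1) → Fin m → ℂ), ?_, ?_, hsnoc_a, hsnoc_b, rfl⟩
    · intro i
      refine Fin.lastCases ?_ (fun j => ?_) i
      · simp only [Fin.snoc_last]; positivity
      · simp only [Fin.snoc_castSucc]
        exact div_nonneg (hcm0 j) hs0.le
    · rw [Fin.sum_univ_castSucc]
      simp only [Fin.snoc_castSucc, Fin.snoc_last]
      rw [← Finset.sum_div]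
      field_simp
      linarith
  · have hmix : (((1 + s)⁻¹ : ℝ) : ℂ) • σ + (((s / (1 + s)) : ℝ) : ℂ) •
        (∑ i : Fin (k+1), (((Fin.snoc (fun i => cm i / s) (1/s) : Fin (k+1) → ℝ) i : ℝ) : ℂ) •
          prodState ((Fin.snoc a e0 : Fin (k+1) → Fin m → ℂ) i) ((Fin.snoc b e0 : Fin (k+1) → Fin m → ℂ) i))
      = ∑ i : Fin (k+1), (((Fin.snoc (fun i => cp i / (1+s)) (1/(1+s)) : Fin (k+1) → ℝ) i : ℝ) : ℂ) •
          prodState ((Fin.snoc a e0 : Fin (k+1) → Fin m → ℂ) i) ((Fin.snoc b e0 : Fin (k+1) → Fin m → ℂ) i) := by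
      rw [expand, expand, hdecomp, smul_add, Finset.smul_sum, Finset.smul_sum]
      rw [← add_assoc, ← Finset.sum_add_distrib]
      congr 1
      · refine Finset.sum_congr rfl fun i _ => ?_
        rw [smul_smul, smul_smul, ← add_smul]
        congr 1
        have hsc : (1+s)⁻¹ * c i + (s/(1+s)) * (cm i/s) = cp i/(1+s) := by
          field_simp
          linear_combination hcpm i
        exact_mod_cast hsc
      · rw [smul_smul]
        congr 1
        have hsc : (s/(1+s)) * (1/s) = 1/(1+s) := by field_simp
        exact_mod_cast hsc
    rw [hmix]
    refine ⟨k+1, (Fin.snoc (fun i => cp i / (1+s)) (1/(1+s)) : Fin (k+1) → ℝ), (Fin.snoc a e0 : Fin (k+1) → Fin m → ℂ),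
      (Fin.snoc b e0 : Fin (k+1) → Fin m → ℂ), ?_, ?_, hsnoc_a, hsnoc_b, rfl⟩
    · intro i
      refine Fin.lastCases ?_ (fun j => ?_) i
      · simp only [Fin.snoc_last]; positivity
      · simp only [Fin.snoc_castSucc]
        exact div_nonneg (hcp0 j) h1s.le
    · rw [Fin.sum_univ_castSucc]
      simp only [Fin.snoc_castSucc, Fin.snoc_last]
      rw [← Finset.sum_div, hcp_sum]
      field_simp
      ring

lemma robustness_eq (σ : Matrix (Fin m × Fin m) (Fin m × Fin m) ℂ) :
    robustness σ = sInf (Sset σ) := rfl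

lemma bddBelow_Sset (σ : Matrix (Fin m × Fin m) (Fin m × Fin m) ℂ) :
    BddBelow (Sset σ) := ⟨0, fun x hx => hx.1⟩

set_option maxHeartbeats 2000000 in
lemma mem_mix (σ₁ σ₂ : Matrix (Fin m × Fin m) (Fin m × Fin m) ℂ) {t s₁ s₂ : ℝ}
    (ht0 : 0 ≤ t) (ht1 : t ≤ 1) (h1 : s₁ ∈ Sset σ₁) (h2 : s₂ ∈ Sset σ₂) :
    t * s₁ + (1 - t) * s₂ ∈
      Sset (((t : ℝ) : ℂ) • σ₁ + (((1 - t : ℝ)) : ℂ) • σ₂) := by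
  obtain ⟨hs₁0, π₁, hπ₁, hm₁⟩ := h1
  obtain ⟨hs₂0, π₂, hπ₂, hm₂⟩ := h2
  have ht1' : 0 ≤ 1 - t := by linarith
  have h1s₁ : (0:ℝ) < 1 + s₁ := by linarith
  have h1s₂ : (0:ℝ) < 1 + s₂ := by linarith
  have hs0 : 0 ≤ t * s₁ + (1 - t) * s₂ := by
    have := mul_nonneg ht0 hs₁0
    have := mul_nonneg ht1' hs₂0
    linarith
  have h1s : (0:ℝ) < 1 + (t * s₁ + (1 - t) * s₂) := by linarith
  have h1sC : ((1:ℂ) + (↑t * ↑s₁ + (1 - ↑t) * ↑s₂)) ≠ 0 := by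
    have : ((1 + (t * s₁ + (1 - t) * s₂) : ℝ) : ℂ) ≠ 0 := by
      exact_mod_cast h1s.ne'
    push_cast at this
    convert this using 2 <;> push_cast <;> ring
  have h1s₁C : ((1:ℂ) + (s₁:ℂ)) ≠ 0 := by exact_mod_cast h1s₁.ne'
  have h1s₂C : ((1:ℂ) + (s₂:ℂ)) ≠ 0 := by exact_mod_cast h1s₂.ne'
  have hw1 : 0 ≤ t * (1 + s₁) / (1 + (t * s₁ + (1 - t) * s₂)) := by positivity
  have hw2 : 0 ≤ (1 - t) * (1 + s₂) / (1 + (t * s₁ + (1 - t) * s₂)) := by positivity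
  have hwsum : t * (1 + s₁) / (1 + (t * s₁ + (1 - t) * s₂))
      + (1 - t) * (1 + s₂) / (1 + (t * s₁ + (1 - t) * s₂)) = 1 := by
    field_simp
    ring
  refine ⟨hs0, ?_⟩
  by_cases hs : t * s₁ + (1 - t) * s₂ = 0
  · -- degenerate case
    have h10 : t * s₁ = 0 := by
      have := mul_nonneg ht0 hs₁0
      have := mul_nonneg ht1' hs₂0
      linarith
    have h20 : (1 - t) * s₂ = 0 := by
      have := mul_nonneg ht0 hs₁0
      have := mul_nonneg ht1' hs₂0
      linarith
    refine ⟨π₁, hπ₁, ?_⟩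
    have key : (((1 + (t * s₁ + (1 - t) * s₂))⁻¹ : ℝ) : ℂ) •
          (((t : ℝ) : ℂ) • σ₁ + (((1 - t : ℝ)) : ℂ) • σ₂)
        + ((((t * s₁ + (1 - t) * s₂) / (1 + (t * s₁ + (1 - t) * s₂))) : ℝ) : ℂ) • π₁
        = (((t * (1 + s₁) / (1 + (t * s₁ + (1 - t) * s₂)) : ℝ)) : ℂ) •
            ((((1 + s₁)⁻¹ : ℝ) : ℂ) • σ₁ + (((s₁ / (1 + s₁)) : ℝ) : ℂ) • π₁)
        + ((((1 - t) * (1 + s₂) / (1 + (t * s₁ + (1 - t) * s₂)) : ℝ)) : ℂ) •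
            ((((1 + s₂)⁻¹ : ℝ) : ℂ) • σ₂ + (((s₂ / (1 + s₂)) : ℝ) : ℂ) • π₂) := by
      rcases mul_eq_zero.1 h10 with ht' | hs₁' <;>
        rcases mul_eq_zero.1 h20 with ht'' | hs₂''
      · exfalso; rw [ht'] at ht''; norm_num at ht''
      · subst ht'; subst hs₂''
        ext p q
        simp only [Matrix.add_apply, Matrix.smul_apply, smul_eq_mul]
        push_cast
        field_simp
        ring
      · have ht1eq : t = 1 := by linarith
        subst ht1eq; subst hs₁'
        ext p q
        simp only [Matrix.add_apply, Matrix.smul_apply, smul_eq_mul]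
        push_cast
        field_simp
        ring
      · subst hs₁'; subst hs₂''
        ext p q
        simp only [Matrix.add_apply, Matrix.smul_apply, smul_eq_mul]
        push_cast
        field_simp
        ring
    rw [key]
    exact sep_combo hm₁ hm₂ hw1 hw2 hwsum
  · refine ⟨((t * s₁ / (t * s₁ + (1 - t) * s₂) : ℝ) : ℂ) • π₁
      + (((1 - t) * s₂ / (t * s₁ + (1 - t) * s₂) : ℝ) : ℂ) • π₂, ?_, ?_⟩
    · refine sep_combo hπ₁ hπ₂ ?_ ?_ ?_
      · positivity
      · positivity
      · field_simp
    · have hsC : ((t : ℂ) * s₁ + (1 - (t:ℂ)) * s₂) ≠ 0 := by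
        have : ((t * s₁ + (1 - t) * s₂ : ℝ) : ℂ) ≠ 0 := by exact_mod_cast hs
        push_cast at this
        convert this using 2 <;> push_cast <;> ring
      have key : (((1 + (t * s₁ + (1 - t) * s₂))⁻¹ : ℝ) : ℂ) •
            (((t : ℝ) : ℂ) • σ₁ + (((1 - t : ℝ)) : ℂ) • σ₂)
          + ((((t * s₁ + (1 - t) * s₂) / (1 + (t * s₁ + (1 - t) * s₂))) : ℝ) : ℂ) •
            (((t * s₁ / (t * s₁ + (1 - t) * s₂) : ℝ) : ℂ) • π₁
              + (((1 - t) * s₂ / (t * s₁ + (1 - t) * s₂) : ℝ) : ℂ) • π₂)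
          = (((t * (1 + s₁) / (1 + (t * s₁ + (1 - t) * s₂)) : ℝ)) : ℂ) •
              ((((1 + s₁)⁻¹ : ℝ) : ℂ) • σ₁ + (((s₁ / (1 + s₁)) : ℝ) : ℂ) • π₁)
          + ((((1 - t) * (1 + s₂) / (1 + (t * s₁ + (1 - t) * s₂)) : ℝ)) : ℂ) •
              ((((1 + s₂)⁻¹ : ℝ) : ℂ) • σ₂ + (((s₂ / (1 + s₂)) : ℝ) : ℂ) • π₂) := by
        ext p q
        simp only [Matrix.add_apply, Matrix.smul_apply, smul_eq_mul]
        push_cast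
        field_simp
        ring
      rw [key]
      exact sep_combo hm₁ hm₂ hw1 hw2 hwsum
end RobustAux

/-- The robustness of entanglement is convex. -/
theorem robustness_convex {m : ℕ} (σ₁ σ₂ : Matrix (Fin m × Fin m) (Fin m × Fin m) ℂ)
    (h₁ : IsDensity σ₁) (h₂ : IsDensity σ₂) (t : ℝ) (ht0 : 0 ≤ t) (ht1 : t ≤ 1) :
    robustness (((t : ℝ) : ℂ) • σ₁ + (((1 - t : ℝ)) : ℂ) • σ₂) ≤
      t * robustness σ₁ + (1 - t) * robustness σ₂ := by
  rw [RobustAux.robustness_eq, RobustAux.robustness_eq, RobustAux.robustness_eq]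
  have hne₁ := RobustAux.nonempty_Sset σ₁ h₁
  have hne₂ := RobustAux.nonempty_Sset σ₂ h₂
  refine le_of_forall_pos_le_add fun ε hε => ?_
  obtain ⟨x₁, hx₁mem, hx₁lt⟩ := Real.lt_sInf_add_pos hne₁ hε
  obtain ⟨x₂, hx₂mem, hx₂lt⟩ := Real.lt_sInf_add_pos hne₂ hε
  have hmem := RobustAux.mem_mix σ₁ σ₂ ht0 ht1 hx₁mem hx₂mem
  have hle : sInf (RobustAux.Sset (((t : ℝ) : ℂ) • σ₁ + (((1 - t : ℝ)) : ℂ) • σ₂))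
      ≤ t * x₁ + (1 - t) * x₂ :=
    csInf_le (RobustAux.bddBelow_Sset _) hmem
  have h1t : 0 ≤ 1 - t := by linarith
  have e1 : t * x₁ ≤ t * (sInf (RobustAux.Sset σ₁) + ε) :=
    mul_le_mul_of_nonneg_left hx₁lt.le ht0
  have e2 : (1 - t) * x₂ ≤ (1 - t) * (sInf (RobustAux.Sset σ₂) + ε) :=
    mul_le_mul_of_nonneg_left hx₂lt.le h1t
  nlinarith [e1, e2]
end
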